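/- Linear independence satisfies Transitivity: if A ⫝_B C and A ⫝_C D in a K-vector space V with B ⊆ C, then A ⫝_B D. -/
import Mathlib

/-- The linear independence relation: `A` is independent from `B` over `C` in the
`K`-vector space `V`. -/
def Indep (K : Type*) {V : Type*} [Field K] [AddCommGroup V] [Module K V]
    (A C B : Set V) : Prop :=
  Submodule.span K (A ∪ C) ⊓ Submodule.span K (B ∪ C) = Submodule.span K C

/-- Transitivity of linear independence. -/
theorem indep_transitivity {K V : Type*} [Field K] [AddCommGroup V] [Module K V]
    (A B C D : Set V) (h₁ : Indep K A B C) (h₂ : Indep K A C D) (hBC : B ⊆ C) :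
    Indep K A B D := by
  unfold Indep at *
  apply le_antisymm
  · intro x hx
    obtain ⟨hxA, hxD⟩ := hx
    have hxC : x ∈ Submodule.span K C := by
      rw [← h₂]
      exact ⟨Submodule.span_mono (Set.union_subset_union_right A hBC) hxA,
        Submodule.span_mono (Set.union_subset_union_right D hBC) hxD⟩
    rw [← h₁]
    exact ⟨hxA, Submodule.span_mono Set.subset_union_left hxC⟩
  · exact le_inf (Submodule.span_mono Set.subset_union_right)
      (Submodule.span_mono Set.subset_union_right)
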